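/- Let b be an integer with b ≡ 2 (mod 4), p a prime with p ≡ 1 (mod 4), and x, y, u, v integers with p = x² + (b²/4+1)y² = u² + v², u ≡ 1 (mod 4), the odd parts of x and y ≡ 1 (mod 4), and 4 ∣ v. If the conclusion Q(b) of Sun's Conjecture 4 (defined in the context) holds, then Q(−b) holds. -/
import Mathlib


/-- The Lucas sequence `U_n(b,c)`: `U_0 = 0`, `U_1 = 1`,
`U_{n+1} = b·U_n − c·U_{n−1}`. -/
def lucasU (b c : ℤ) : ℕ → ℤ
  | 0 => 0
  | 1 => 1
  | n + 2 => b * lucasU b c (n + 1) - c * lucasU b c n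

/-- The Lucas sequence `V_n(b,c)`: `V_0 = 2`, `V_1 = b`,
`V_{n+1} = b·V_n − c·V_{n−1}`. -/
def lucasV (b c : ℤ) : ℕ → ℤ
  | 0 => 2
  | 1 => b
  | n + 2 => b * lucasV b c (n + 1) - c * lucasV b c n

/-- The odd part of an integer `m`, i.e. `m / 2^(v₂ m)`. -/
def oddPart (m : ℤ) : ℤ := m / 2 ^ padicValInt 2 m

/-- `2‖m`: `2` divides `m` but `4` does not. -/
def ExactlyTwo (m : ℤ) : Prop := 2 ∣ m ∧ ¬ (4 ∣ m)

/-- The conclusion `Q(β)` of Sun's Conjecture 4, relative to fixed `p, x, y, v`. -/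
def Conj4Concl (p : ℕ) (x y v β : ℤ) : Prop :=
  (ExactlyTwo y →
    (p : ℤ) ∣ lucasV β (-1) ((p - 1) / 4) ∧
      x * lucasU β (-1) ((p - 1) / 4) ≡
        (-1) ^ ((β + v - 2) / 4).natAbs * y [ZMOD (p : ℤ)]) ∧
  (4 ∣ y →
    (p : ℤ) ∣ lucasU β (-1) ((p - 1) / 4) ∧
      lucasV β (-1) ((p - 1) / 4) ≡ 2 * (-1) ^ ((y + v) / 4).natAbs [ZMOD (p : ℤ)])


private lemma lucasU_neg (b c : ℤ) : ∀ n, lucasU (-b) c n = (-1) ^ (n + 1) * lucasU b c n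
  | 0 => by simp [lucasU]
  | 1 => by simp [lucasU]
  | (n + 2) => by
      rw [lucasU, lucasU, lucasU_neg b c (n + 1), lucasU_neg b c n]
      ring

private lemma lucasV_neg (b c : ℤ) : ∀ n, lucasV (-b) c n = (-1) ^ n * lucasV b c n
  | 0 => by simp [lucasV]
  | 1 => by simp [lucasV]
  | (n + 2) => by
      rw [lucasV, lucasV, lucasV_neg b c (n + 1), lucasV_neg b c n]
      ring

private lemma pow_flip (a c : ℤ) (h : Odd (a - c)) :
    ((-1 : ℤ)) ^ a.natAbs = -(-1 : ℤ) ^ c.natAbs := by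
  obtain ⟨t, ht⟩ := h
  rcases Int.even_or_odd c with hc | hc
  · obtain ⟨s, hs⟩ := hc
    have ha : Odd a := ⟨t + s, by omega⟩
    rw [(Int.natAbs_odd.mpr ha).neg_one_pow,
      (Int.natAbs_even.mpr ⟨s, hs⟩).neg_one_pow]
  · obtain ⟨s, hs⟩ := hc
    have ha : Even a := ⟨t + s + 1, by omega⟩
    rw [(Int.natAbs_even.mpr ha).neg_one_pow,
      (Int.natAbs_odd.mpr ⟨s, hs⟩).neg_one_pow]
    norm_num

theorem statement7 (p : ℕ) (hp : p.Prime) (hp4 : p % 4 = 1)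
    (b x y u v : ℤ) (hb : b % 4 = 2)
    (hpx : (p : ℤ) = x ^ 2 + (b ^ 2 / 4 + 1) * y ^ 2)
    (hpu : (p : ℤ) = u ^ 2 + v ^ 2)
    (hu : u ≡ 1 [ZMOD 4])
    (hx : oddPart x ≡ 1 [ZMOD 4])
    (hy : oddPart y ≡ 1 [ZMOD 4])
    (hv : 4 ∣ v)
    (hQ : Conj4Concl p x y v b) :
    Conj4Concl p x y v (-b) := by
  obtain ⟨hQ1, hQ2⟩ := hQ
  set n := (p - 1) / 4 with hn
  have hk : b = 4 * (b / 4) + 2 := by omega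
  set k := b / 4 with hkdef
  obtain ⟨w, hw⟩ := hv
  have hbsq : b ^ 2 = 4 * (4 * k ^ 2 + 4 * k + 1) := by rw [hk]; ring
  have hbq : b ^ 2 / 4 = 4 * k ^ 2 + 4 * k + 1 := by
    rw [hbsq, Int.mul_ediv_cancel_left _ (by norm_num)]
  have hpodd : p % 2 = 1 := by omega
  -- if y is even, then n is even
  have key : (2 ∣ y) → Even n := by
    intro ⟨s, hs⟩
    have h8 : (8 : ℤ) ∣ (b ^ 2 / 4 + 1) * y ^ 2 := by
      refine ⟨(2 * k ^ 2 + 2 * k + 1) * s ^ 2, ?_⟩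
      rw [hbq, hs]; ring
    obtain ⟨t, ht⟩ := h8
    have hxodd : x % 2 = 1 := by
      rcases Int.even_or_odd x with ⟨j, hj⟩ | ⟨j, hj⟩
      · exfalso
        have : (p : ℤ) % 2 = 0 := by
          rw [hpx, ht, hj]; ring_nf; omega
        omega
      · omega
    obtain ⟨j, hj⟩ : ∃ j, x = 2 * j + 1 := ⟨x / 2, by omega⟩
    obtain ⟨r, hr⟩ := Int.even_mul_succ_self j
    have hxsq : x ^ 2 = 8 * r + 1 := by
      have : x ^ 2 = 4 * (j * (j + 1)) + 1 := by rw [hj]; ring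
      omega
    have hp8 : (p : ℤ) = 8 * (r + t) + 1 := by rw [hpx, ht, hxsq]; ring
    have hp8' : p % 8 = 1 := by omega
    exact ⟨(p - 1) / 8, by omega⟩
  constructor
  · intro h2y
    obtain ⟨hV, hU⟩ := hQ1 h2y
    have hev : Even n := key h2y.1
    constructor
    · rw [lucasV_neg]
      exact hV.mul_left _
    · rw [lucasU_neg, (hev.add_one).neg_one_pow]
      have he1 : (b + v - 2) / 4 = k + w := by
        have : b + v - 2 = 4 * (k + w) := by omega
        rw [this, Int.mul_ediv_cancel_left _ (by norm_num)]
      have he2 : (-b + v - 2) / 4 = w - k - 1 := by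
        have : -b + v - 2 = 4 * (w - k - 1) := by omega
        rw [this, Int.mul_ediv_cancel_left _ (by norm_num)]
      have hflip : ((-1 : ℤ)) ^ ((-b + v - 2) / 4).natAbs =
          -(-1 : ℤ) ^ ((b + v - 2) / 4).natAbs := by
        rw [he1, he2]
        exact pow_flip _ _ ⟨-k - 1, by ring⟩
      have h2 : x * (-1 * lucasU b (-1) n) = -(x * lucasU b (-1) n) := by ring
      have h3 : ((-1 : ℤ)) ^ ((-b + v - 2) / 4).natAbs * y =
          -(((-1 : ℤ)) ^ ((b + v - 2) / 4).natAbs * y) := by rw [hflip]; ring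
      rw [h2, h3]
      exact hU.neg
  · intro h4y
    obtain ⟨hU, hV⟩ := hQ2 h4y
    have hev : Even n := key (dvd_trans ⟨2, rfl⟩ h4y)
    constructor
    · rw [lucasU_neg]
      exact hU.mul_left _
    · rw [lucasV_neg, hev.neg_one_pow, one_mul]
      exact hV
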